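/- Let n ≥ 2, let L be an n×n real matrix that is essentially nonnegative (all off-diagonal entries nonnegative), irreducible, and has all column sums equal to zero, let γ_i > 0 for i = 1,…,n, and set D = diag(γ_1,…,γ_n). Let C_{ij} denote the (i,j) cofactor of L. Then the function d ↦ det(D − d·L) is a polynomial in d whose coefficient of dⁿ is zero and whose coefficient of d^{n−1} equals (−1)^{n−1}·Σ_{i=1}^n γ_i·C_{ii}, which is strictly positive; in particular det(D − d·L) is a polynomial of degree exactly n−1 in d. -/

import Mathlib

open Matrix Filter Set Topology

/-- A square matrix is irreducible if it is not permutation-similar to a nontrivial block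
upper triangular matrix; equivalently, for every nonempty proper subset `S` of indices there
are `i ∈ S` and `j ∉ S` with `A i j ≠ 0`. -/
def IsIrreducibleMatrix {n : ℕ} (A : Matrix (Fin n) (Fin n) ℝ) : Prop :=
  ∀ S : Set (Fin n), S.Nonempty → S ≠ Set.univ → ∃ i ∈ S, ∃ j ∈ Sᶜ, A i j ≠ 0

/-- The spectral bound of a real square matrix: the maximum of the real parts of its
(complex) eigenvalues, i.e. of the roots of its characteristic polynomial over `ℂ`. -/
noncomputable def spectralBound {n : ℕ} (A : Matrix (Fin n) (Fin n) ℝ) : ℝ :=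
  sSup {x : ℝ | ∃ μ : ℂ, ((A.map Complex.ofReal).charpoly).IsRoot μ ∧ μ.re = x}

/-- The spectral radius of a real square matrix: the maximum modulus of its (complex)
eigenvalues, i.e. of the roots of its characteristic polynomial over `ℂ`. -/
noncomputable def specRad {n : ℕ} (A : Matrix (Fin n) (Fin n) ℝ) : ℝ :=
  sSup {x : ℝ | ∃ μ : ℂ, ((A.map Complex.ofReal).charpoly).IsRoot μ ∧ ‖μ‖ = x}

/-- The `(i,j)` cofactor of a square matrix: `(-1)^(i+j)` times the determinant of the
matrix obtained by deleting row `i` and column `j`. -/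
noncomputable def cofactor {n : ℕ} (A : Matrix (Fin (n+1)) (Fin (n+1)) ℝ) (i j : Fin (n+1)) : ℝ :=
  (-1 : ℝ) ^ ((i : ℕ) + (j : ℕ)) * (A.submatrix i.succAbove j.succAbove).det

section DetVAux
open Polynomial

lemma coeff_linear_mul (a b : ℝ) (q : ℝ[X]) (k : ℕ) :
    ((C a + C b * X) * q).coeff (k+1) = a * q.coeff (k+1) + b * q.coeff k := by
  rw [add_mul, coeff_add, coeff_C_mul, mul_assoc, coeff_C_mul, coeff_X_mul]

lemma natDegree_prod_linear_le {ι} (s : Finset ι) (f g : ι → ℝ) :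
    (∏ i ∈ s, (C (f i) + C (g i) * X)).natDegree ≤ s.card := by
  refine le_trans (Polynomial.natDegree_prod_le s _) ?_
  calc ∑ i ∈ s, (C (f i) + C (g i) * X).natDegree ≤ ∑ _i ∈ s, 1 := by
        refine Finset.sum_le_sum fun i _ => ?_
        refine le_trans (natDegree_add_le _ _) ?_
        simp only [natDegree_C, max_le_iff]
        exact ⟨Nat.zero_le _, le_trans (natDegree_C_mul_le _ _) (by simp)⟩
    _ = s.card := by simp

lemma coeff_prod_linear_top {ι} (s : Finset ι) (f g : ι → ℝ) :
    (∏ i ∈ s, (C (f i) + C (g i) * X)).coeff s.card = ∏ i ∈ s, g i := by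
  induction s using Finset.cons_induction with
  | empty => simp
  | cons a s ha ih =>
    rw [Finset.prod_cons, Finset.card_cons, coeff_linear_mul, ih,
      Polynomial.coeff_eq_zero_of_natDegree_lt
        (lt_of_le_of_lt (natDegree_prod_linear_le s f g) (Nat.lt_succ_self _)),
      Finset.prod_cons]
    ring

lemma coeff_prod_linear_subtop {ι} [DecidableEq ι] {s : Finset ι} (hs : s.Nonempty)
    (f g : ι → ℝ) :
    (∏ i ∈ s, (C (f i) + C (g i) * X)).coeff (s.card - 1)
      = ∑ j ∈ s, f j * ∏ i ∈ s.erase j, g i := by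
  induction hs using Finset.Nonempty.cons_induction with
  | singleton a => simp
  | cons a s ha hs ih =>
    obtain ⟨m, hm⟩ : ∃ m, s.card = m + 1 :=
      ⟨s.card - 1, (Nat.succ_pred_eq_of_pos (Finset.card_pos.mpr hs)).symm⟩
    rw [Finset.prod_cons, Finset.card_cons, Nat.add_sub_cancel, hm, coeff_linear_mul,
      ← hm, coeff_prod_linear_top]
    have h2 : (∏ x ∈ s, (C (f x) + C (g x) * X)).coeff m = ∑ j ∈ s, f j * ∏ i ∈ s.erase j, g i := by
      rw [← ih]; congr 1; omega
    rw [h2, Finset.sum_cons, Finset.erase_cons, Finset.mul_sum]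
    congr 1
    refine Finset.sum_congr rfl fun j hj => ?_
    rw [Finset.erase_cons_of_ne _ (by rintro rfl; exact ha hj), Finset.prod_cons]
    ring

noncomputable def detPoly {m : ℕ} (A B : Matrix (Fin m) (Fin m) ℝ) : ℝ[X] :=
  (Matrix.of fun i j => C (A i j) + C (B i j) * X).det

lemma detPoly_eval {m : ℕ} (A B : Matrix (Fin m) (Fin m) ℝ) (d : ℝ) :
    (detPoly A B).eval d = (A + d • B).det := by
  have : (detPoly A B).eval d = (evalRingHom d) (detPoly A B) := rfl
  rw [this, detPoly, RingHom.map_det]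
  congr 1
  ext i j
  simp only [RingHom.mapMatrix_apply, Matrix.map_apply, Matrix.of_apply, coe_evalRingHom, eval_add, eval_mul, eval_C,
    eval_X, Matrix.add_apply, Matrix.smul_apply, smul_eq_mul]
  ring

lemma detPoly_natDegree_le {m : ℕ} (A B : Matrix (Fin m) (Fin m) ℝ) :
    (detPoly A B).natDegree ≤ m := by
  rw [detPoly, Matrix.det_apply]
  refine natDegree_sum_le_of_forall_le _ _ fun σ _ => ?_
  have hsign : (Equiv.Perm.sign σ •
      ∏ i, (Matrix.of fun i j => C (A i j) + C (B i j) * X) (σ i) i).natDegree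
      = (∏ i, (Matrix.of fun i j => C (A i j) + C (B i j) * X) (σ i) i).natDegree := by
    rcases Int.units_eq_one_or (Equiv.Perm.sign σ) with sg | sg
    · rw [sg, one_smul]
    · rw [sg, Units.neg_smul, one_smul, natDegree_neg]
  rw [hsign]
  simpa using natDegree_prod_linear_le Finset.univ (fun i => A (σ i) i) (fun i => B (σ i) i)

lemma detPoly_coeff_card {m : ℕ} (A B : Matrix (Fin m) (Fin m) ℝ) :
    (detPoly A B).coeff m = B.det := by
  rw [detPoly, Matrix.det_apply, finset_sum_coeff, Matrix.det_apply]
  refine Finset.sum_congr rfl fun σ _ => ?_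
  have : ∀ p : ℝ[X], (Equiv.Perm.sign σ • p).coeff m = Equiv.Perm.sign σ • p.coeff m := by
    intro p
    rcases Int.units_eq_one_or (Equiv.Perm.sign σ) with sg | sg <;>
      simp [sg, Units.neg_smul]
  rw [this]
  congr 1
  have := coeff_prod_linear_top Finset.univ (fun i => A (σ i) i) (fun i => B (σ i) i)
  simpa using this

lemma detPoly_coeff_subtop {k : ℕ} (A B : Matrix (Fin (k+1)) (Fin (k+1)) ℝ) :
    (detPoly A B).coeff k = ∑ j, (B.updateCol j (fun a => A a j)).det := by
  rw [detPoly, Matrix.det_apply, finset_sum_coeff]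
  have hsmul : ∀ (σ : Equiv.Perm (Fin (k+1))) (p : ℝ[X]) (l : ℕ),
      (Equiv.Perm.sign σ • p).coeff l = Equiv.Perm.sign σ • p.coeff l := by
    intro σ p l
    rcases Int.units_eq_one_or (Equiv.Perm.sign σ) with sg | sg <;>
      simp [sg, Units.neg_smul]
  have step1 : ∀ σ : Equiv.Perm (Fin (k+1)),
      (Equiv.Perm.sign σ • ∏ i, (Matrix.of fun i j => C (A i j) + C (B i j) * X) (σ i) i).coeff k
      = ∑ j, Equiv.Perm.sign σ • (A (σ j) j * ∏ i ∈ Finset.univ.erase j, B (σ i) i) := by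
    intro σ
    rw [hsmul, ← Finset.smul_sum]
    congr 1
    have := coeff_prod_linear_subtop (Finset.univ_nonempty (α := Fin (k+1)))
      (fun i => A (σ i) i) (fun i => B (σ i) i)
    simpa using this
  rw [Finset.sum_congr rfl fun σ _ => step1 σ, Finset.sum_comm]
  refine Finset.sum_congr rfl fun j _ => ?_
  rw [Matrix.det_apply]
  refine Finset.sum_congr rfl fun σ _ => ?_
  congr 1
  rw [← Finset.mul_prod_erase Finset.univ _ (Finset.mem_univ j)]
  rw [Matrix.updateCol_self]
  congr 1
  refine Finset.prod_congr rfl fun i hi => ?_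
  exact (Matrix.updateCol_ne (Finset.ne_of_mem_erase hi)).symm

lemma det_shift_ne_zero {n : ℕ} (hn : 1 ≤ n) (L : Matrix (Fin (n+1)) (Fin (n+1)) ℝ)
    (hess : ∀ i j, i ≠ j → 0 ≤ L i j)
    (hirr : IsIrreducibleMatrix L)
    (hcol : ∀ j, ∑ i, L i j = 0)
    (i₀ : Fin (n+1)) (t : ℝ) (ht : 0 ≤ t) :
    (((-L).submatrix i₀.succAbove i₀.succAbove) + t • (1 : Matrix (Fin n) (Fin n) ℝ)).det ≠ 0 := by
  set e := i₀.succAbove with he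
  set A : Matrix (Fin n) (Fin n) ℝ := (-L).submatrix e e with hA
  intro hdet
  -- get a left null vector
  have hdetT : (A + t • (1 : Matrix (Fin n) (Fin n) ℝ))ᵀ.det = 0 := by
    rw [Matrix.det_transpose]; exact hdet
  obtain ⟨x, hx0, hx⟩ := Matrix.exists_mulVec_eq_zero_iff.mpr hdetT
  have key : ∀ k, (∑ j, A j k * x j) + t * x k = 0 := by
    intro k
    have := congrFun hx k
    simp only [Matrix.mulVec, dotProduct, Matrix.transpose_apply, Matrix.add_apply,
      Matrix.smul_apply, Matrix.one_apply, Pi.zero_apply, smul_eq_mul, mul_ite, mul_zero,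
      mul_one] at this
    rw [show (∑ j, (A j k + if j = k then t else 0) * x j)
        = (∑ j, A j k * x j) + ∑ j, (if j = k then t else 0) * x j by
      rw [← Finset.sum_add_distrib]; exact Finset.sum_congr rfl fun j _ => by ring] at this
    rw [show (∑ j, (if j = k then t else 0) * x j) = t * x k by
      simp [ite_mul, Finset.sum_ite_eq']] at this
    exact this
  -- choose a maximizer of |x|
  have hne : (Finset.univ : Finset (Fin n)).Nonempty := ⟨⟨0, hn⟩, Finset.mem_univ _⟩
  obtain ⟨k₀, -, hk₀⟩ := Finset.exists_max_image Finset.univ (fun j => |x j|) hne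
  set y : Fin n → ℝ := if 0 ≤ x k₀ then x else -x with hy
  set M : ℝ := |x k₀| with hM
  have hyk₀ : y k₀ = M := by
    rw [hy, hM]
    split
    · exact (abs_of_nonneg (by assumption)).symm
    · simp only [Pi.neg_apply]
      exact (abs_of_neg (by linarith [not_le.mp (by assumption)])).symm
  have hyle : ∀ j, y j ≤ M := by
    intro j
    have h1 := hk₀ j (Finset.mem_univ j)
    rw [hy]
    split
    · exact le_trans (le_abs_self _) h1
    · exact le_trans (neg_le_abs (x j)) h1
  have hMpos : 0 < M := by
    rcases Function.ne_iff.mp hx0 with ⟨j, hj⟩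
    exact lt_of_lt_of_le (abs_pos.mpr hj) (hk₀ j (Finset.mem_univ j))
  have key' : ∀ k, (∑ j, A j k * y j) + t * y k = 0 := by
    intro k
    rw [hy]
    split
    · exact key k
    · have h2 : (∑ j, A j k * (-x) j) + t * (-x) k
          = -((∑ j, A j k * x j) + t * x k) := by
        simp only [Pi.neg_apply, mul_neg]
        rw [Finset.sum_neg_distrib]
        ring
      rw [h2, key k, neg_zero]
  -- the key claim
  have claim : ∀ k, y k = M → L i₀ (e k) = 0 ∧
      (∀ j, j ≠ k → L (e j) (e k) ≠ 0 → y j = M) := by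
    intro k hyk
    set c := e k with hc
    have hsum : ∑ j, L (e j) c = - L i₀ c := by
      have h0 := hcol c
      rw [Fin.sum_univ_succAbove (fun i => L i c) i₀] at h0
      linarith
    have hkey : ∑ j, L (e j) c * y j = t * M := by
      have h3 := key' k
      rw [hyk] at h3
      have h4 : (∑ j, A j k * y j) = -(∑ j, L (e j) c * y j) := by
        rw [← Finset.sum_neg_distrib]
        exact Finset.sum_congr rfl fun j _ => by
          simp [hA, Matrix.submatrix_apply, hc]
      rw [h4] at h3
      linarith
    have hsplit : L c c * M + ∑ j ∈ Finset.univ.erase k, L (e j) c * y j = t * M := by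
      rw [← hkey, ← Finset.add_sum_erase Finset.univ _ (Finset.mem_univ k), hyk, hc]
    have hsum_erase : ∑ j ∈ Finset.univ.erase k, L (e j) c = -L i₀ c - L c c := by
      have h5 := Finset.add_sum_erase Finset.univ (fun j => L (e j) c) (Finset.mem_univ k)
      have h5' : L (e k) c + ∑ j ∈ Finset.univ.erase k, L (e j) c = ∑ j, L (e j) c := h5
      rw [hsum, ← hc] at h5'
      linarith
    have hbound : ∑ j ∈ Finset.univ.erase k, L (e j) c * y j
        ≤ ∑ j ∈ Finset.univ.erase k, L (e j) c * M := by
      refine Finset.sum_le_sum fun j hj => ?_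
      have hje : e j ≠ c := by
        rw [hc]
        exact fun h => Finset.ne_of_mem_erase hj (Fin.succAbove_right_injective h)
      exact mul_le_mul_of_nonneg_left (hyle j) (hess (e j) c hje)
    have hMsum : ∑ j ∈ Finset.univ.erase k, L (e j) c * M = (-L i₀ c - L c c) * M := by
      rw [← Finset.sum_mul, hsum_erase]
    have hi₀c : 0 ≤ L i₀ c := hess i₀ c (Ne.symm (Fin.succAbove_ne i₀ k))
    have htM : t * M ≤ -L i₀ c * M := by nlinarith
    have htM0 : 0 ≤ t * M := mul_nonneg ht hMpos.le
    have hL0 : L i₀ c = 0 := by nlinarith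
    have heq : ∑ j ∈ Finset.univ.erase k, L (e j) c * y j
        = ∑ j ∈ Finset.univ.erase k, L (e j) c * M := by nlinarith
    have hpt := (Finset.sum_eq_sum_iff_of_le (fun j hj => by
      have hje : e j ≠ c := by
        rw [hc]
        exact fun h => Finset.ne_of_mem_erase hj (Fin.succAbove_right_injective h)
      exact mul_le_mul_of_nonneg_left (hyle j) (hess (e j) c hje))).mp heq
    refine ⟨hL0, fun j hjk hLjk => ?_⟩
    have hj' := hpt j (Finset.mem_erase.mpr ⟨hjk, Finset.mem_univ j⟩)
    have hLpos : L (e j) c ≠ 0 := hLjk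
    exact mul_left_cancel₀ hLpos hj'
  -- derive the contradiction via irreducibility
  set T : Set (Fin (n+1)) := {i | ∃ k, y k = M ∧ i = e k} with hT
  have hi₀T : i₀ ∉ T := by
    rintro ⟨k, -, hk⟩
    exact Fin.succAbove_ne i₀ k hk.symm
  obtain ⟨i, hiS, j, hjT, hLij⟩ := hirr Tᶜ ⟨i₀, hi₀T⟩ (by
    intro hTc
    have : e k₀ ∈ Tᶜ := hTc ▸ Set.mem_univ _
    exact this ⟨k₀, hyk₀, rfl⟩)
  rw [compl_compl] at hjT
  obtain ⟨k, hyk, rfl⟩ := hjT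
  obtain ⟨hL0, hforce⟩ := claim k hyk
  by_cases hii₀ : i = i₀
  · rw [hii₀] at hLij
    exact hLij hL0
  · obtain ⟨j', hj'⟩ := Fin.exists_succAbove_eq hii₀
    have hj'k : j' ≠ k := by
      rintro rfl
      exact hiS ⟨j', hyk, hj'.symm⟩
    have hej' : e j' = i := hj'
    have : y j' = M := hforce j' hj'k (by rw [hej']; exact hLij)
    exact hiS ⟨j', this, hj'.symm⟩

lemma det_submatrix_pos {n : ℕ} (hn : 1 ≤ n) (L : Matrix (Fin (n+1)) (Fin (n+1)) ℝ)
    (hess : ∀ i j, i ≠ j → 0 ≤ L i j)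
    (hirr : IsIrreducibleMatrix L)
    (hcol : ∀ j, ∑ i, L i j = 0)
    (i₀ : Fin (n+1)) :
    0 < ((-L).submatrix i₀.succAbove i₀.succAbove).det := by
  set A : Matrix (Fin n) (Fin n) ℝ := (-L).submatrix i₀.succAbove i₀.succAbove with hA
  set r : Polynomial ℝ := detPoly A 1 with hr
  have heval : ∀ t : ℝ, r.eval t = (A + t • 1).det := fun t => detPoly_eval A 1 t
  have hnz : ∀ t : ℝ, 0 ≤ t → r.eval t ≠ 0 := by
    intro t ht
    rw [heval t]
    exact det_shift_ne_zero hn L hess hirr hcol i₀ t ht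
  have hcoeff : r.coeff n = 1 := by rw [hr, detPoly_coeff_card, Matrix.det_one]
  have hdeg : r.natDegree = n :=
    le_antisymm (detPoly_natDegree_le A 1)
      (le_natDegree_of_ne_zero (by rw [hcoeff]; exact one_ne_zero))
  have hr0 : r ≠ 0 := fun h => by simp [h] at hcoeff
  have hlead : r.leadingCoeff = 1 := by rw [leadingCoeff, hdeg, hcoeff]
  have hdpos : 0 < r.degree := by
    rw [degree_eq_natDegree hr0, hdeg]
    exact_mod_cast hn
  have htend : Filter.Tendsto (fun t => r.eval t) Filter.atTop Filter.atTop :=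
    r.tendsto_atTop_of_leadingCoeff_nonneg hdpos (by rw [hlead]; norm_num)
  obtain ⟨T, hT1, hT0⟩ :=
    ((htend.eventually_ge_atTop 1).and (Filter.eventually_ge_atTop (0:ℝ))).exists
  have heval0 : r.eval 0 = A.det := by rw [heval 0]; simp
  rcases lt_or_ge 0 A.det with h | h
  · exact h
  · exfalso
    have h00 : r.eval 0 < 0 := lt_of_le_of_ne (heval0 ▸ h) (hnz 0 le_rfl)
    have hsub := intermediate_value_Icc hT0 ((r.continuous).continuousOn)
    have hmem : (0:ℝ) ∈ Set.Icc (r.eval 0) (r.eval T) := ⟨h00.le, by linarith⟩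
    obtain ⟨c, hc, hc0⟩ := hsub hmem
    exact hnz c hc.1 hc0


lemma neg_one_pow_cofactor {n : ℕ} (L : Matrix (Fin (n+1)) (Fin (n+1)) ℝ) (i : Fin (n+1)) :
    (-1:ℝ)^n * cofactor L i i = ((-L).submatrix i.succAbove i.succAbove).det := by
  rw [cofactor]
  have h1 : ((-1:ℝ))^((i:ℕ)+(i:ℕ)) = 1 := Even.neg_one_pow ⟨i, rfl⟩
  have h2 : (-L).submatrix i.succAbove i.succAbove
      = -(L.submatrix i.succAbove i.succAbove) := rfl
  rw [h1, one_mul, h2, Matrix.det_neg]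
  simp

lemma cof_pos {n : ℕ} (hn : 1 ≤ n) (L : Matrix (Fin (n+1)) (Fin (n+1)) ℝ)
    (hess : ∀ i j, i ≠ j → 0 ≤ L i j)
    (hirr : IsIrreducibleMatrix L)
    (hcol : ∀ j, ∑ i, L i j = 0) (i : Fin (n+1)) :
    0 < (-1:ℝ)^n * cofactor L i i := by
  rw [neg_one_pow_cofactor]
  exact det_submatrix_pos hn L hess hirr hcol i


end DetVAux

open Polynomial in
/-- For an essentially nonnegative, irreducible `L` of size `n+1` with zero column
sums and `D = diag(γ)` with `γ_i > 0`, the function `d ↦ det(D − d·L)` is a polynomial in `d`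
whose leading (degree `n+1`) coefficient is zero and whose degree-`n` coefficient equals
`(-1)^n·Σ γ_i·C_{ii} > 0`; in particular the polynomial has degree exactly `n`. -/
theorem det_V_polynomial {n : ℕ} (hn : 1 ≤ n)
    (L : Matrix (Fin (n+1)) (Fin (n+1)) ℝ)
    (hess : ∀ i j, i ≠ j → 0 ≤ L i j)
    (hirr : IsIrreducibleMatrix L)
    (hcol : ∀ j, ∑ i, L i j = 0)
    (γ : Fin (n+1) → ℝ) (hγ : ∀ i, 0 < γ i) :
    ∃ p : Polynomial ℝ,
      (∀ d : ℝ, (Matrix.diagonal γ - d • L).det = p.eval d) ∧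
      p.coeff (n+1) = 0 ∧
      p.coeff n = (-1 : ℝ) ^ n * ∑ i, γ i * cofactor L i i ∧
      0 < (-1 : ℝ) ^ n * ∑ i, γ i * cofactor L i i ∧
      p.degree = n := by
  set p := detPoly (Matrix.diagonal γ) (-L) with hp
  have heval : ∀ d : ℝ, (Matrix.diagonal γ - d • L).det = p.eval d := by
    intro d
    rw [hp, detPoly_eval]
    congr 1
    rw [smul_neg, sub_eq_add_neg]
  have hdetL : L.det = 0 := by
    have hv : Lᵀ *ᵥ (fun _ => (1:ℝ)) = 0 := by
      funext j
      simp [Matrix.mulVec, dotProduct, Matrix.transpose_apply, hcol j]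
    have hvne : (fun _ => (1:ℝ)) ≠ (0 : Fin (n+1) → ℝ) := by
      intro h
      simpa using congrFun h 0
    have h0 : Lᵀ.det = 0 := Matrix.exists_mulVec_eq_zero_iff.mp ⟨_, hvne, hv⟩
    rw [← Matrix.det_transpose]
    exact h0
  have hc1 : p.coeff (n+1) = 0 := by
    rw [hp, detPoly_coeff_card, Matrix.det_neg, hdetL, mul_zero]
  have hupdate : ∀ j : Fin (n+1), ((-L).updateCol j (fun a => Matrix.diagonal γ a j)).det
      = γ j * ((-L).submatrix j.succAbove j.succAbove).det := by
    intro j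
    have hcolv : (fun a => Matrix.diagonal γ a j)
        = γ j • ((Pi.single j (1:ℝ)) : Fin (n+1) → ℝ) := by
      funext a
      simp only [Matrix.diagonal_apply, Pi.smul_apply, Pi.single_apply, smul_eq_mul]
      split
      · next h => rw [h]; ring
      · ring
    rw [hcolv, Matrix.det_updateCol_smul]
    congr 1
    rw [Matrix.det_succ_column _ j, Finset.sum_eq_single j]
    · have hsub : ((-L).updateCol j (Pi.single j (1:ℝ))).submatrix j.succAbove j.succAbove
          = (-L).submatrix j.succAbove j.succAbove := by
        ext a b
        exact Matrix.updateCol_ne (Fin.succAbove_ne j b)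
      rw [hsub]
      have he : ((-1:ℝ))^((j:ℕ)+(j:ℕ)) = 1 := Even.neg_one_pow ⟨j, rfl⟩
      simp [Matrix.updateCol_self, Pi.single_eq_same, he]
    · intro i _ hij
      simp [Matrix.updateCol_self, Pi.single_apply, hij]
    · intro h
      exact absurd (Finset.mem_univ j) h
  have hc2 : p.coeff n = (-1 : ℝ) ^ n * ∑ i, γ i * cofactor L i i := by
    rw [hp, detPoly_coeff_subtop, Finset.mul_sum]
    refine Finset.sum_congr rfl fun j _ => ?_
    rw [hupdate j, ← neg_one_pow_cofactor]
    ring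
  have hpos : 0 < (-1 : ℝ) ^ n * ∑ i, γ i * cofactor L i i := by
    rw [Finset.mul_sum]
    refine Finset.sum_pos (fun i _ => ?_) Finset.univ_nonempty
    have := cof_pos hn L hess hirr hcol i
    nlinarith [hγ i]
  have hane : p.coeff n ≠ 0 := by rw [hc2]; exact ne_of_gt hpos
  have hub : p.natDegree ≤ n+1 := detPoly_natDegree_le _ _
  have hle : p.natDegree ≤ n := by
    by_contra h
    push_neg at h
    have hnd : p.natDegree = n+1 := le_antisymm hub h
    have hp0 : p = 0 := leadingCoeff_eq_zero.mp (by rw [leadingCoeff, hnd]; exact hc1)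
    rw [hp0] at hane
    simp at hane
  have hge : n ≤ p.natDegree := le_natDegree_of_ne_zero hane
  have hpne : p ≠ 0 := fun h => by simp [h] at hane
  refine ⟨p, heval, hc1, hc2, hpos, ?_⟩
  rw [degree_eq_natDegree hpne, le_antisymm hle hge]
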